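/- Let G be a finite d-regular bipartite graph with parts V₁, V₂ each of size m, and adjacency matrix in block form A = [[0, Cᵀ],[C, 0]] for an m×m matrix C. Let α, β, γ be real numbers and H = [[dα·I_m, β·Cᵀ],[β·C, dγ·I_m]]. Then all eigenvalues of H are positive if and only if α > 0 and αγ − β² > 0. -/

import Mathlib

open Matrix

private lemma posDef_of_eigenvalues_pos' {n : Type*} [Fintype n] [DecidableEq n]
    {A : Matrix n n ℝ} (hA : A.IsHermitian) (h : ∀ i, 0 < hA.eigenvalues i) : A.PosDef := by
  exact hA.posDef_iff_eigenvalues_pos.mpr h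

set_option maxHeartbeats 1000000 in
theorem stmt7 (m d : ℕ) (hm : 1 ≤ m) (hd : 0 < d)
    (G : SimpleGraph (Fin m ⊕ Fin m)) [DecidableRel G.Adj]
    (hconn : G.Connected) (hreg : G.IsRegularOfDegree d)
    (C : Matrix (Fin m) (Fin m) ℝ)
    (hadj : G.adjMatrix ℝ = Matrix.fromBlocks 0 Cᵀ C 0)
    (α β γ : ℝ)
    (H : Matrix (Fin m ⊕ Fin m) (Fin m ⊕ Fin m) ℝ)
    (hH : H = Matrix.fromBlocks (((d : ℝ) * α) • (1 : Matrix (Fin m) (Fin m) ℝ))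
      (β • Cᵀ) (β • C) (((d : ℝ) * γ) • (1 : Matrix (Fin m) (Fin m) ℝ)))
    (hHsym : H.IsHermitian) :
    (∀ i, 0 < hHsym.eigenvalues i) ↔ (0 < α ∧ 0 < α * γ - β ^ 2) := by
  have hd' : (0:ℝ) < d := by exact_mod_cast hd
  have hm' : (0:ℝ) < m := by exact_mod_cast hm
  -- entries of C are 0 or 1
  have hCij : ∀ i j, C i j = (G.adjMatrix ℝ) (Sum.inr i) (Sum.inl j) := by
    intro i j; rw [hadj]; rfl
  have hC01 : ∀ i j, C i j = 0 ∨ C i j = 1 := by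
    intro i j
    rw [hCij]
    by_cases h : G.Adj (Sum.inr i) (Sum.inl j) <;> simp [h]
  -- row sums
  have hrow : ∀ i, ∑ j, C i j = (d:ℝ) := by
    intro i
    have h1 := SimpleGraph.adjMatrix_mulVec_const_apply_of_regular (α := ℝ) (a := 1)
      hreg (v := Sum.inr i)
    rw [hadj, Matrix.fromBlocks_mulVec] at h1
    simpa [Matrix.mulVec, dotProduct] using h1
  have hcol : ∀ j, ∑ i, C i j = (d:ℝ) := by
    intro j
    have h1 := SimpleGraph.adjMatrix_mulVec_const_apply_of_regular (α := ℝ) (a := 1)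
      hreg (v := Sum.inl j)
    rw [hadj, Matrix.fromBlocks_mulVec] at h1
    simpa [Matrix.mulVec, dotProduct, Matrix.transpose_apply] using h1
  -- quadratic form
  have key : ∀ u v : Fin m → ℝ,
      (Sum.elim u v) ⬝ᵥ H *ᵥ (Sum.elim u v)
        = (d:ℝ)*α*(∑ j, u j^2) + 2*β*(∑ i, (∑ j, C i j * u j) * v i)
          + (d:ℝ)*γ*(∑ i, v i^2) := by
    intro u v
    rw [hH, Matrix.fromBlocks_mulVec]
    simp only [Sum.elim_comp_inl, Sum.elim_comp_inr]
    rw [sumElim_dotProduct_sumElim]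
    simp only [dotProduct_add, Matrix.smul_mulVec, Matrix.one_mulVec,
      dotProduct_smul]
    have h1 : u ⬝ᵥ Cᵀ *ᵥ v = (C *ᵥ u) ⬝ᵥ v := by
      rw [Matrix.dotProduct_mulVec, Matrix.vecMul_transpose]
    have h2 : v ⬝ᵥ C *ᵥ u = (C *ᵥ u) ⬝ᵥ v := dotProduct_comm _ _
    rw [h1, h2]
    have h3 : (C *ᵥ u) ⬝ᵥ v = ∑ i, (∑ j, C i j * u j) * v i := rfl
    have h4 : u ⬝ᵥ u = ∑ j, u j ^ 2 := by
      simp [dotProduct, pow_two]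
    have h5 : v ⬝ᵥ v = ∑ i, v i ^ 2 := by
      simp [dotProduct, pow_two]
    rw [h3, h4, h5]
    simp only [smul_eq_mul]
    ring
  have e0 : Fin m := ⟨0, hm⟩
  constructor
  · intro hpos
    have hPD : H.PosDef := posDef_of_eigenvalues_pos' hHsym hpos
    have hα : 0 < α := by
      have hx : (Sum.elim (fun _ => (1:ℝ)) (0 : Fin m → ℝ) : Fin m ⊕ Fin m → ℝ) ≠ 0 := by
        intro h
        have := congr_fun h (Sum.inl e0)
        simp at this
      have hq := hPD.dotProduct_mulVec_pos hx
      rw [star_trivial, key] at hq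
      simp at hq
      nlinarith [mul_pos hd' hm', hq]
    refine ⟨hα, ?_⟩
    have hx : (Sum.elim (fun _ : Fin m => β) (fun _ : Fin m => -α) : Fin m ⊕ Fin m → ℝ) ≠ 0 := by
      intro h
      have h2 := congr_fun h (Sum.inr e0)
      simp only [Sum.elim_inr, Pi.zero_apply, neg_eq_zero] at h2
      exact absurd h2 (ne_of_gt hα)
    have hq := hPD.dotProduct_mulVec_pos hx
    rw [star_trivial, key] at hq
    have h1 : ∑ j : Fin m, ((fun _ => β) j)^2 = (m:ℝ) * β^2 := by simp [mul_comm]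
    have h2 : ∑ i : Fin m, ((fun _ => -α) i)^2 = (m:ℝ) * α^2 := by simp [mul_comm]
    have h3 : ∑ i : Fin m, (∑ j, C i j * ((fun _ => β) j)) * ((fun _ => -α) i)
        = (m:ℝ) * ((d:ℝ) * β * (-α)) := by
      simp only [← Finset.sum_mul, hrow]
      simp only [Finset.sum_const, Finset.card_univ, Fintype.card_fin, nsmul_eq_mul]
      ring
    rw [h1, h2, h3] at hq
    nlinarith [mul_pos (mul_pos hm' hd') hα, hq]
  · rintro ⟨hα, hδ⟩
    have hγ : 0 < γ := by nlinarith [sq_nonneg β]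
    have hPD : H.PosDef := by
      refine Matrix.PosDef.of_dotProduct_mulVec_pos hHsym fun x hx => ?_
      rw [star_trivial]
      have hxe : x = Sum.elim (x ∘ Sum.inl) (x ∘ Sum.inr) := (Sum.elim_comp_inl_inr x).symm
      set u : Fin m → ℝ := x ∘ Sum.inl with hu
      set v : Fin m → ℝ := x ∘ Sum.inr with hv
      rw [hxe, key]
      set P := ∑ j, u j^2 with hP
      set Q := ∑ i, v i^2 with hQ
      set S := ∑ i, (∑ j, C i j * u j) * v i with hS
      have hP0 : 0 ≤ P := Finset.sum_nonneg fun j _ => sq_nonneg _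
      have hQ0 : 0 ≤ Q := Finset.sum_nonneg fun i _ => sq_nonneg _
      have hvanish : ∀ (w : Fin m → ℝ), (∑ i, w i^2) = 0 → w = 0 := by
        intro w hw
        funext i
        have := (Finset.sum_eq_zero_iff_of_nonneg
          (fun i _ => sq_nonneg (w i))).mp hw i (Finset.mem_univ i)
        exact pow_eq_zero_iff (two_ne_zero) |>.mp this
      rcases eq_or_lt_of_le hQ0 with hQz | hQpos
      · -- v = 0
        have hv0 : v = 0 := hvanish v hQz.symm
        have hS0 : S = 0 := by
          rw [hS]
          apply Finset.sum_eq_zero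
          intro i _
          rw [hv0]
          simp
        have hu0 : u ≠ 0 := by
          intro h
          apply hx
          rw [hxe, h, hv0]
          ext (i | i) <;> simp
        have hPpos : 0 < P := by
          rcases eq_or_lt_of_le hP0 with h | h
          · exact absurd (hvanish u h.symm) hu0
          · exact h
        rw [hS0, ← hQz]
        have : 0 < (d:ℝ) * α * P := by positivity
        linarith
      rcases eq_or_lt_of_le hP0 with hPz | hPpos
      · -- u = 0
        have hu0 : u = 0 := hvanish u hPz.symm
        have hS0 : S = 0 := by
          rw [hS]
          apply Finset.sum_eq_zero
          intro i _
          rw [hu0]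
          simp
        rw [hS0, ← hPz]
        have : 0 < (d:ℝ) * γ * Q := by positivity
        linarith
      · -- main case
        have step1 : ∀ i, (∑ j, C i j * u j)^2 ≤ (d:ℝ) * ∑ j, C i j * u j^2 := by
          intro i
          have hcs := Finset.sum_mul_sq_le_sq_mul_sq Finset.univ
            (fun j => C i j) (fun j => C i j * u j)
          have e1 : ∑ j, C i j * (C i j * u j) = ∑ j, C i j * u j :=
            Finset.sum_congr rfl fun j _ => by rcases hC01 i j with h|h <;> simp [h]
          have e2 : ∑ j, (C i j)^2 = (d:ℝ) := by
            rw [← hrow i]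
            exact Finset.sum_congr rfl fun j _ => by rcases hC01 i j with h|h <;> simp [h]
          have e3 : ∑ j, (C i j * u j)^2 = ∑ j, C i j * u j^2 :=
            Finset.sum_congr rfl fun j _ => by
              rcases hC01 i j with h|h <;> simp [h, mul_pow]
          calc (∑ j, C i j * u j)^2 = (∑ j, C i j * (C i j * u j))^2 := by rw [e1]
            _ ≤ (∑ j, (C i j)^2) * (∑ j, (C i j * u j)^2) := hcs
            _ = (d:ℝ) * ∑ j, C i j * u j^2 := by rw [e2, e3]
        have step2 : ∑ i, (∑ j, C i j * u j)^2 ≤ (d:ℝ)^2 * P := by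
          calc ∑ i, (∑ j, C i j * u j)^2 ≤ ∑ i, (d:ℝ) * ∑ j, C i j * u j^2 :=
                Finset.sum_le_sum fun i _ => step1 i
            _ = (d:ℝ) * ∑ j, (∑ i, C i j) * u j^2 := by
                rw [← Finset.mul_sum, Finset.sum_comm]
                congr 1
                exact Finset.sum_congr rfl fun j _ => (Finset.sum_mul _ _ _).symm
            _ = (d:ℝ)^2 * P := by
                simp only [hcol]
                rw [← Finset.mul_sum, ← hP]
                ring
        have hCS : S^2 ≤ ((d:ℝ)^2 * P) * Q := by
          have hcs := Finset.sum_mul_sq_le_sq_mul_sq Finset.univ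
            (fun i => ∑ j, C i j * u j) v
          calc S^2 ≤ (∑ i, (∑ j, C i j * u j)^2) * Q := by
                rw [hS, hQ]; exact hcs
            _ ≤ ((d:ℝ)^2 * P) * Q := mul_le_mul_of_nonneg_right step2 hQ0
        set a := Real.sqrt P with haName
        set b := Real.sqrt Q with hbName
        have ha2 : a^2 = P := Real.sq_sqrt hP0
        have hb2 : b^2 = Q := Real.sq_sqrt hQ0
        have ha : 0 < a := Real.sqrt_pos.mpr hPpos
        have hb : 0 < b := Real.sqrt_pos.mpr hQpos
        have hSabs : |S| ≤ (d:ℝ) * a * b := by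
          rw [← Real.sqrt_sq_eq_abs]
          have h9 : ((d:ℝ)*a*b)^2 = ((d:ℝ)^2*P)*Q := by
            rw [mul_pow, mul_pow, ha2, hb2]
          calc Real.sqrt (S^2) ≤ Real.sqrt (((d:ℝ)*a*b)^2) :=
                Real.sqrt_le_sqrt (by rw [h9]; exact hCS)
            _ = (d:ℝ)*a*b := Real.sqrt_sq (by positivity)
        have hS1 : -((d:ℝ)*a*b) ≤ S := (abs_le.mp hSabs).1
        have hS2 : S ≤ (d:ℝ)*a*b := (abs_le.mp hSabs).2
        rw [← ha2, ← hb2]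
        have hmain : 0 < α * ((d:ℝ)*α*a^2 + 2*β*S + (d:ℝ)*γ*b^2) := by
          rcases le_or_gt 0 β with hβ | hβ
          · nlinarith [mul_nonneg (mul_nonneg hα.le hβ)
              (by linarith : (0:ℝ) ≤ S + (d:ℝ)*a*b),
              sq_nonneg (α*a - β*b), mul_pos hd' (mul_pos hδ (mul_pos hb hb)),
              mul_pos hd' (mul_pos ha hb)]
          · nlinarith [mul_nonneg (mul_nonneg hα.le (by linarith : (0:ℝ) ≤ -β))
              (by linarith : (0:ℝ) ≤ (d:ℝ)*a*b - S),
              sq_nonneg (α*a + β*b), mul_pos hd' (mul_pos hδ (mul_pos hb hb)),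
              mul_pos hd' (mul_pos ha hb)]
        nlinarith [hmain, hα]
    intro i
    exact hPD.eigenvalues_pos i
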